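/- (Lagrangian formulation of the δ-RPDE.) Fix integers n, m and δ ∈ ℝ. Let U be a four times continuously differentiable real function on an open set D ⊆ ℝ² where α ≠ β, ∂U/∂α ≠ 0 and ∂U/∂β ≠ 0. Define on D the functions P := (α−β)·U_{αβ}/(U_α·U_β), Q_α := −((α−β)/2)·U_{αβ}²/(U_α²·U_β) + (1/(2(α−β)))·(m²/U_β − n²·U_β/U_α²) + 2δ²·(α−β)·U_β, and Q_β := −((α−β)/2)·U_{αβ}²/(U_α·U_β²) + (1/(2(α−β)))·(−m²·U_α/U_β² + n²/U_α) + 2δ²·(α−β)·U_α, which are respectively ∂ℒ/∂U_{αβ}, ∂ℒ/∂U_α and ∂ℒ/∂U_β for the Lagrangian ℒ = ((α−β)/2)·U_{αβ}²/(U_α·U_β) + (1/(2(α−β)))·(m²·U_α/U_β + n²·U_β/U_α) + 2δ²·(α−β)·U_α·U_β. Then the Euler–Lagrange expression ∂²P/∂α∂β − ∂Q_α/∂α − ∂Q_β/∂β (all derivatives taken as derivatives of the composite functions of (α,β)) vanishes at a point of D if and only if U satisfies the δ-RPDE R(α,β,U;n,m) + 2δ²·U_α·U_β·(2·U_{αβ}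 − (U_α − U_β)/(α−β)) = 0 at that point. -/

import Mathlib

/-- Partial derivative with respect to the first variable. -/
noncomputable def pda (f : ℝ × ℝ → ℝ) (p : ℝ × ℝ) : ℝ :=
  deriv (fun x => f (x, p.2)) p.1

/-- Partial derivative with respect to the second variable. -/
noncomputable def pdb (f : ℝ × ℝ → ℝ) (p : ℝ × ℝ) : ℝ :=
  deriv (fun y => f (p.1, y)) p.2

/-- The RPDE expression R(α,β,U;n,m). -/
noncomputable def Rexpr (n m : ℤ) (U : ℝ × ℝ → ℝ) (p : ℝ × ℝ) : ℝ :=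
  let s := p.1 - p.2
  let Ua := pda U p
  let Ub := pdb U p
  let Uaa := pda (pda U) p
  let Uab := pdb (pda U) p
  let Ubb := pdb (pdb U) p
  let Uaab := pdb (pda (pda U)) p
  let Uabb := pdb (pdb (pda U)) p
  let Uaabb := pdb (pdb (pda (pda U))) p ;
  (-Uaabb
    + Uaab * (1 / s + Ubb / Ub + Uab / Ua)
    + Uabb * (1 / (-s) + Uaa / Ua + Uab / Ub)
    - Uaa * Ubb * Uab / (Ua * Ub)
    + Uaa * ((n : ℝ) ^ 2 * Ub ^ 2 / (s ^ 2 * Ua ^ 2) - Uab / (s * Ua) - Uab ^ 2 / Ua ^ 2)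
    + Ubb * ((m : ℝ) ^ 2 * Ua ^ 2 / (s ^ 2 * Ub ^ 2) + Uab / (s * Ub) - Uab ^ 2 / Ub ^ 2)
    + ((n : ℝ) ^ 2 / (2 * s ^ 3)) * (Ub / Ua) * (Ua + Ub + 2 * (-s) * Uab)
    - ((m : ℝ) ^ 2 / (2 * s ^ 3)) * (Ua / Ub) * (Ua + Ub + 2 * s * Uab)
    + (1 / (2 * s)) * Uab ^ 2 * (1 / Ua - 1 / Ub))

lemma hasDerivAt_pda' (g : ℝ × ℝ → ℝ) (a b : ℝ) (hg : DifferentiableAt ℝ g (a, b)) :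
    HasDerivAt (fun x => g (x, b)) (pda g (a, b)) a := by
  have h0 : DifferentiableAt ℝ (fun x : ℝ => ((x, b) : ℝ × ℝ)) a :=
    differentiableAt_id.prodMk (differentiableAt_const _)
  have h1 : DifferentiableAt ℝ (fun x : ℝ => g (x, b)) a := hg.comp a h0
  exact h1.hasDerivAt

lemma hasDerivAt_pdb' (g : ℝ × ℝ → ℝ) (a b : ℝ) (hg : DifferentiableAt ℝ g (a, b)) :
    HasDerivAt (fun y => g (a, y)) (pdb g (a, b)) b := by
  have h0 : DifferentiableAt ℝ (fun y : ℝ => ((a, y) : ℝ × ℝ)) b :=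
    (differentiableAt_const _).prodMk differentiableAt_id
  have h1 : DifferentiableAt ℝ (fun y : ℝ => g (a, y)) b := hg.comp b h0
  exact h1.hasDerivAt

lemma pda_fderiv (g : ℝ × ℝ → ℝ) (a b : ℝ) (hg : DifferentiableAt ℝ g (a, b)) :
    pda g (a, b) = fderiv ℝ g (a, b) (1, 0) := by
  have h1 : HasDerivAt (fun x : ℝ => ((x, b) : ℝ × ℝ)) (1, 0) a :=
    (hasDerivAt_id' (x := a)).prodMk (hasDerivAt_const a b)
  have h2 : HasDerivAt (fun x : ℝ => g (x, b)) (fderiv ℝ g (a, b) (1, 0)) a :=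
    hg.hasFDerivAt.comp_hasDerivAt a h1
  exact (hasDerivAt_pda' g a b hg).unique h2

lemma pdb_fderiv (g : ℝ × ℝ → ℝ) (a b : ℝ) (hg : DifferentiableAt ℝ g (a, b)) :
    pdb g (a, b) = fderiv ℝ g (a, b) (0, 1) := by
  have h1 : HasDerivAt (fun y : ℝ => ((a, y) : ℝ × ℝ)) (0, 1) b :=
    (hasDerivAt_const b a).prodMk (hasDerivAt_id' (x := b))
  have h2 : HasDerivAt (fun y : ℝ => g (a, y)) (fderiv ℝ g (a, b) (0, 1)) b :=
    hg.hasFDerivAt.comp_hasDerivAt b h1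
  exact (hasDerivAt_pdb' g a b hg).unique h2

lemma contDiffOn_pda' {g : ℝ × ℝ → ℝ} {D : Set (ℝ × ℝ)} (hD : IsOpen D)
    {k n : WithTop ℕ∞} (hkn : k + 1 ≤ n) (hg : ContDiffOn ℝ n g D) :
    ContDiffOn ℝ k (pda g) D := by
  have h1 : ContDiffOn ℝ k (fderiv ℝ g) D := hg.fderiv_of_isOpen hD hkn
  have h2 : ContDiffOn ℝ k (fun r => fderiv ℝ g r (1, 0)) D := h1.clm_apply contDiffOn_const
  refine h2.congr fun r hr => ?_
  have hd : DifferentiableAt ℝ g r := by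
    refine (hg.contDiffAt (hD.mem_nhds hr)).differentiableAt ?_
    exact ne_of_gt (lt_of_lt_of_le (by simpa using (WithTop.lt_add_one_iff (k := k)).2 le_rfl |>.trans_le' (zero_le k)) hkn)
  simpa using pda_fderiv g r.1 r.2 (by simpa using hd)

lemma contDiffOn_pdb' {g : ℝ × ℝ → ℝ} {D : Set (ℝ × ℝ)} (hD : IsOpen D)
    {k n : WithTop ℕ∞} (hkn : k + 1 ≤ n) (hg : ContDiffOn ℝ n g D) :
    ContDiffOn ℝ k (pdb g) D := by
  have h1 : ContDiffOn ℝ k (fderiv ℝ g) D := hg.fderiv_of_isOpen hD hkn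
  have h2 : ContDiffOn ℝ k (fun r => fderiv ℝ g r (0, 1)) D := h1.clm_apply contDiffOn_const
  refine h2.congr fun r hr => ?_
  have hd : DifferentiableAt ℝ g r := by
    refine (hg.contDiffAt (hD.mem_nhds hr)).differentiableAt ?_
    exact ne_of_gt (lt_of_lt_of_le (by simpa using (WithTop.lt_add_one_iff (k := k)).2 le_rfl |>.trans_le' (zero_le k)) hkn)
  simpa using pdb_fderiv g r.1 r.2 (by simpa using hd)

lemma clairaut' {g : ℝ × ℝ → ℝ} {D : Set (ℝ × ℝ)} (hD : IsOpen D)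
    (hg : ContDiffOn ℝ 2 g D) {a b : ℝ} (hq : (a, b) ∈ D) :
    pda (pdb g) (a, b) = pdb (pda g) (a, b) := by
  have hdiff : ∀ r ∈ D, DifferentiableAt ℝ g r := fun r hr =>
    (hg.contDiffAt (hD.mem_nhds hr)).differentiableAt two_ne_zero
  have hfd : DifferentiableAt ℝ (fderiv ℝ g) (a, b) :=
    (((hg.contDiffAt (hD.mem_nhds hq)).fderiv_right (m := 1) (by norm_num)).differentiableAt one_ne_zero)
  have hsymm : IsSymmSndFDerivAt ℝ g (a, b) :=
    (hg.contDiffAt (hD.mem_nhds hq)).isSymmSndFDerivAt (by simp)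
  have hGb : DifferentiableAt ℝ (fun r => fderiv ℝ g r (0, 1)) (a, b) :=
    (ContinuousLinearMap.apply ℝ ℝ ((0 : ℝ), (1 : ℝ))).differentiableAt.comp _ hfd
  have hGa : DifferentiableAt ℝ (fun r => fderiv ℝ g r (1, 0)) (a, b) :=
    (ContinuousLinearMap.apply ℝ ℝ ((1 : ℝ), (0 : ℝ))).differentiableAt.comp _ hfd
  have hGbF : HasFDerivAt (fun r => fderiv ℝ g r (0, 1))
      ((ContinuousLinearMap.apply ℝ ℝ ((0 : ℝ), (1 : ℝ))).comp (fderiv ℝ (fderiv ℝ g) (a, b)))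
      (a, b) :=
    (ContinuousLinearMap.apply ℝ ℝ ((0 : ℝ), (1 : ℝ))).hasFDerivAt.comp _ hfd.hasFDerivAt
  have hGaF : HasFDerivAt (fun r => fderiv ℝ g r (1, 0))
      ((ContinuousLinearMap.apply ℝ ℝ ((1 : ℝ), (0 : ℝ))).comp (fderiv ℝ (fderiv ℝ g) (a, b)))
      (a, b) :=
    (ContinuousLinearMap.apply ℝ ℝ ((1 : ℝ), (0 : ℝ))).hasFDerivAt.comp _ hfd.hasFDerivAt
  have e1 : pda (pdb g) (a, b) = fderiv ℝ (fderiv ℝ g) (a, b) (1, 0) (0, 1) := by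
    have hev : (fun x => pdb g (x, b)) =ᶠ[nhds a] (fun x => fderiv ℝ g (x, b) (0, 1)) := by
      have hmem : {x : ℝ | (x, b) ∈ D} ∈ nhds a := by
        have hc : Continuous (fun x : ℝ => ((x, b) : ℝ × ℝ)) :=
          continuous_id.prodMk continuous_const
        exact (hD.preimage hc).mem_nhds hq
      filter_upwards [hmem] with x hx
      exact pdb_fderiv g x b (hdiff _ hx)
    have h2 : pda (pdb g) (a, b) = pda (fun r => fderiv ℝ g r (0, 1)) (a, b) :=
      hev.deriv_eq
    rw [h2, pda_fderiv _ a b hGb, hGbF.fderiv]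
    rfl
  have e2 : pdb (pda g) (a, b) = fderiv ℝ (fderiv ℝ g) (a, b) (0, 1) (1, 0) := by
    have hev : (fun y => pda g (a, y)) =ᶠ[nhds b] (fun y => fderiv ℝ g (a, y) (1, 0)) := by
      have hmem : {y : ℝ | (a, y) ∈ D} ∈ nhds b := by
        have hc : Continuous (fun y : ℝ => ((a, y) : ℝ × ℝ)) :=
          continuous_const.prodMk continuous_id
        exact (hD.preimage hc).mem_nhds hq
      filter_upwards [hmem] with y hy
      exact pda_fderiv g a y (hdiff _ hy)
    have h2 : pdb (pda g) (a, b) = pdb (fun r => fderiv ℝ g r (1, 0)) (a, b) :=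
      hev.deriv_eq
    rw [h2, pdb_fderiv _ a b hGa, hGaF.fderiv]
    rfl
  rw [e1, e2, hsymm.eq]

lemma iff_zero_of_mul_eq {x y c d : ℝ} (hc : c ≠ 0) (hd : d ≠ 0) (h : x * c = d * y) :
    (x = 0 ↔ y = 0) := by
  constructor
  · intro hx
    rw [hx, zero_mul] at h
    rcases mul_eq_zero.mp h.symm with h' | h'
    · exact absurd h' hd
    · exact h'
  · intro hy
    rw [hy, mul_zero] at h
    rcases mul_eq_zero.mp h with h' | h'
    · exact h'
    · exact absurd h' hc

set_option maxHeartbeats 1000000 in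
/-- Lagrangian formulation of the δ-RPDE: the Euler–Lagrange expression
∂²P/∂α∂β − ∂Q_α/∂α − ∂Q_β/∂β vanishes exactly on solutions of the δ-RPDE. -/
theorem EulerLagrange_iff_deltaRPDE
    (n m : ℤ) (δ : ℝ) (U : ℝ × ℝ → ℝ)
    (D : Set (ℝ × ℝ)) (hD : IsOpen D)
    (hαβ : ∀ p ∈ D, p.1 ≠ p.2)
    (hUa : ∀ p ∈ D, pda U p ≠ 0) (hUb : ∀ p ∈ D, pdb U p ≠ 0)
    (hU : ContDiffOn ℝ 4 U D)
    (P Qa Qb : ℝ × ℝ → ℝ)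
    (hP : ∀ q, P q = (q.1 - q.2) * pdb (pda U) q / (pda U q * pdb U q))
    (hQa : ∀ q, Qa q =
      -((q.1 - q.2) / 2) * (pdb (pda U) q) ^ 2 / ((pda U q) ^ 2 * pdb U q)
      + (1 / (2 * (q.1 - q.2))) *
          ((m : ℝ) ^ 2 / pdb U q - (n : ℝ) ^ 2 * pdb U q / (pda U q) ^ 2)
      + 2 * δ ^ 2 * (q.1 - q.2) * pdb U q)
    (hQb : ∀ q, Qb q =
      -((q.1 - q.2) / 2) * (pdb (pda U) q) ^ 2 / (pda U q * (pdb U q) ^ 2)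
      + (1 / (2 * (q.1 - q.2))) *
          (-(m : ℝ) ^ 2 * pda U q / (pdb U q) ^ 2 + (n : ℝ) ^ 2 / pda U q)
      + 2 * δ ^ 2 * (q.1 - q.2) * pda U q) :
    ∀ p ∈ D,
      (pdb (pda P) p - pda Qa p - pdb Qb p = 0 ↔
        Rexpr n m U p + 2 * δ ^ 2 * pda U p * pdb U p *
          (2 * pdb (pda U) p - (pda U p - pdb U p) / (p.1 - p.2)) = 0) := by
  intro p hp
  obtain ⟨a, b⟩ := p
  have hs : a - b ≠ 0 := sub_ne_zero.mpr (hαβ (a, b) hp)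
  have hUa0 : pda U (a, b) ≠ 0 := hUa (a, b) hp
  have hUb0 : pdb U (a, b) ≠ 0 := hUb (a, b) hp
  -- smoothness of partials
  have hA3 : ContDiffOn ℝ 3 (pda U) D := contDiffOn_pda' hD (by norm_num) hU
  have hB3 : ContDiffOn ℝ 3 (pdb U) D := contDiffOn_pdb' hD (by norm_num) hU
  have hAA2 : ContDiffOn ℝ 2 (pda (pda U)) D := contDiffOn_pda' hD (by norm_num) hA3
  have hAB2 : ContDiffOn ℝ 2 (pdb (pda U)) D := contDiffOn_pdb' hD (by norm_num) hA3
  have hBB2 : ContDiffOn ℝ 2 (pdb (pdb U)) D := contDiffOn_pdb' hD (by norm_num) hB3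
  have hAAB1 : ContDiffOn ℝ 1 (pdb (pda (pda U))) D := contDiffOn_pdb' hD (by norm_num) hAA2
  -- differentiability
  have dAt : ∀ (g : ℝ × ℝ → ℝ) {k : WithTop ℕ∞}, 1 ≤ k → ContDiffOn ℝ k g D →
      ∀ r ∈ D, DifferentiableAt ℝ g r := fun g k hk hg r hr =>
    (hg.contDiffAt (hD.mem_nhds hr)).differentiableAt (ne_of_gt (lt_of_lt_of_le zero_lt_one hk))
  have dA : ∀ r ∈ D, DifferentiableAt ℝ (pda U) r := dAt _ (by norm_num) hA3
  have dB : ∀ r ∈ D, DifferentiableAt ℝ (pdb U) r := dAt _ (by norm_num) hB3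
  have dAA : ∀ r ∈ D, DifferentiableAt ℝ (pda (pda U)) r := dAt _ (by norm_num) hAA2
  have dAB : ∀ r ∈ D, DifferentiableAt ℝ (pdb (pda U)) r := dAt _ (by norm_num) hAB2
  have dBB : ∀ r ∈ D, DifferentiableAt ℝ (pdb (pdb U)) r := dAt _ (by norm_num) hBB2
  have dAAB : ∀ r ∈ D, DifferentiableAt ℝ (pdb (pda (pda U))) r := dAt _ (by norm_num) hAAB1
  -- Clairaut
  have hc1 : ∀ x y : ℝ, (x, y) ∈ D → pda (pdb U) (x, y) = pdb (pda U) (x, y) :=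
    fun x y h => clairaut' hD (hU.of_le (by norm_num)) h
  have hc2 : ∀ x y : ℝ, (x, y) ∈ D →
      pda (pdb (pda U)) (x, y) = pdb (pda (pda U)) (x, y) :=
    fun x y h => clairaut' hD (hA3.of_le (by norm_num)) h
  -- Stage C1 : pda P on D
  have hPa : ∀ x y : ℝ, (x, y) ∈ D → pda P (x, y) =
      ((pdb (pda U) (x, y) + (x - y) * pdb (pda (pda U)) (x, y)) *
          (pda U (x, y) * pdb U (x, y))
        - (x - y) * pdb (pda U) (x, y) *
          (pda (pda U) (x, y) * pdb U (x, y) + pda U (x, y) * pdb (pda U) (x, y)))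
        / (pda U (x, y) * pdb U (x, y)) ^ 2 := by
    intro x y hxy
    have hA : HasDerivAt (fun t => pda U (t, y)) (pda (pda U) (x, y)) x :=
      hasDerivAt_pda' (pda U) x y (dA _ hxy)
    have hB : HasDerivAt (fun t => pdb U (t, y)) (pdb (pda U) (x, y)) x := by
      have h := hasDerivAt_pda' (pdb U) x y (dB _ hxy)
      rwa [hc1 x y hxy] at h
    have hM : HasDerivAt (fun t => pdb (pda U) (t, y)) (pdb (pda (pda U)) (x, y)) x := by
      have h := hasDerivAt_pda' (pdb (pda U)) x y (dAB _ hxy)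
      rwa [hc2 x y hxy] at h
    have hden : pda U (x, y) * pdb U (x, y) ≠ 0 := mul_ne_zero (hUa _ hxy) (hUb _ hxy)
    have hkey :=
      ((((hasDerivAt_id' (x := x)).sub_const y).mul hM).div (hA.mul hB) hden)
    have hfun : (fun t => P (t, y)) =
        fun t => (t - y) * pdb (pda U) (t, y) / (pda U (t, y) * pdb U (t, y)) :=
      funext fun t => hP (t, y)
    show deriv (fun t => P (t, y)) x = _
    have hkey' : deriv (fun t => (t - y) * pdb (pda U) (t, y) / (pda U (t, y) * pdb U (t, y))) x
        = _ := hkey.deriv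
    rw [hfun, hkey']
    simp only [Pi.mul_apply]
    field_simp
  -- slice derivatives in second variable at (a, b)
  have kA : HasDerivAt (fun y' => pda U (a, y')) (pdb (pda U) (a, b)) b :=
    hasDerivAt_pdb' _ a b (dA _ hp)
  have kB : HasDerivAt (fun y' => pdb U (a, y')) (pdb (pdb U) (a, b)) b :=
    hasDerivAt_pdb' _ a b (dB _ hp)
  have kC : HasDerivAt (fun y' => pda (pda U) (a, y')) (pdb (pda (pda U)) (a, b)) b :=
    hasDerivAt_pdb' _ a b (dAA _ hp)
  have kM : HasDerivAt (fun y' => pdb (pda U) (a, y')) (pdb (pdb (pda U)) (a, b)) b :=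
    hasDerivAt_pdb' _ a b (dAB _ hp)
  have kT : HasDerivAt (fun y' => pdb (pda (pda U)) (a, y'))
      (pdb (pdb (pda (pda U))) (a, b)) b :=
    hasDerivAt_pdb' _ a b (dAAB _ hp)
  -- Stage C2 : pdb (pda P) at (a,b)
  have hden2 : (pda U (a, b) * pdb U (a, b)) ^ 2 ≠ 0 :=
    pow_ne_zero _ (mul_ne_zero hUa0 hUb0)
  have hkey2 :=
    (((kM.add ((((hasDerivAt_id' (x := b)).const_sub a)).mul kT)).mul (kA.mul kB)).sub
        ((((hasDerivAt_id' (x := b)).const_sub a).mul kM).mul ((kC.mul kB).add (kA.mul kM)))).div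
      ((kA.mul kB).pow 2) hden2
  have hev : (fun y' => pda P (a, y')) =ᶠ[nhds b]
      (fun y' => ((pdb (pda U) (a, y') + (a - y') * pdb (pda (pda U)) (a, y')) *
          (pda U (a, y') * pdb U (a, y'))
        - (a - y') * pdb (pda U) (a, y') *
          (pda (pda U) (a, y') * pdb U (a, y') + pda U (a, y') * pdb (pda U) (a, y')))
        / (pda U (a, y') * pdb U (a, y')) ^ 2) := by
    have hmem : {y' : ℝ | (a, y') ∈ D} ∈ nhds b := by
      have hc : Continuous (fun y' : ℝ => ((a, y') : ℝ × ℝ)) :=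
        continuous_const.prodMk continuous_id
      exact (hD.preimage hc).mem_nhds hp
    filter_upwards [hmem] with y' hy'
    exact hPa a y' hy'
  have hPab : pdb (pda P) (a, b) = _ := hev.deriv_eq.trans hkey2.deriv
  -- Stage A : pda Qa at (a,b)
  have aA : HasDerivAt (fun t => pda U (t, b)) (pda (pda U) (a, b)) a :=
    hasDerivAt_pda' (pda U) a b (dA _ hp)
  have aB : HasDerivAt (fun t => pdb U (t, b)) (pdb (pda U) (a, b)) a := by
    have h := hasDerivAt_pda' (pdb U) a b (dB _ hp)
    rwa [hc1 a b hp] at h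
  have aM : HasDerivAt (fun t => pdb (pda U) (t, b)) (pdb (pda (pda U)) (a, b)) a := by
    have h := hasDerivAt_pda' (pdb (pda U)) a b (dAB _ hp)
    rwa [hc2 a b hp] at h
  have h2s : (2 : ℝ) * (a - b) ≠ 0 := mul_ne_zero two_ne_zero hs
  have hdenA : (pda U (a, b)) ^ 2 * pdb U (a, b) ≠ 0 :=
    mul_ne_zero (pow_ne_zero _ hUa0) hUb0
  have hA2ne : (pda U (a, b)) ^ 2 ≠ 0 := pow_ne_zero _ hUa0
  have hkeyA :=
    (((((((hasDerivAt_id' (x := a)).sub_const b).div_const 2).neg.mul (aM.pow 2)).div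
        ((aA.pow 2).mul aB) hdenA).add
      (((hasDerivAt_const a (1 : ℝ)).div
          ((((hasDerivAt_id' (x := a)).sub_const b)).const_mul 2) h2s).mul
        (((hasDerivAt_const a ((m : ℝ) ^ 2)).div aB hUb0).sub
          ((aB.const_mul ((n : ℝ) ^ 2)).div (aA.pow 2) hA2ne)))).add
      ((((hasDerivAt_id' (x := a)).sub_const b).const_mul (2 * δ ^ 2)).mul aB))
  have hfunA : (fun t => Qa (t, b)) = fun t =>
      -((t - b) / 2) * (pdb (pda U) (t, b)) ^ 2 / ((pda U (t, b)) ^ 2 * pdb U (t, b))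
      + (1 / (2 * (t - b))) *
          ((m : ℝ) ^ 2 / pdb U (t, b) - (n : ℝ) ^ 2 * pdb U (t, b) / (pda U (t, b)) ^ 2)
      + 2 * δ ^ 2 * (t - b) * pdb U (t, b) :=
    funext fun t => hQa (t, b)
  have hQaab : pda Qa (a, b) = _ :=
    (congrArg (fun f => deriv f a) hfunA).trans hkeyA.deriv
  -- Stage B : pdb Qb at (a,b)
  have hdenB : pda U (a, b) * (pdb U (a, b)) ^ 2 ≠ 0 :=
    mul_ne_zero hUa0 (pow_ne_zero _ hUb0)
  have hB2ne : (pdb U (a, b)) ^ 2 ≠ 0 := pow_ne_zero _ hUb0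
  have h2sb : (2 : ℝ) * (a - b) ≠ 0 := h2s
  have hkeyB :=
    (((((((hasDerivAt_id' (x := b)).const_sub a).div_const 2).neg.mul (kM.pow 2)).div
        (kA.mul (kB.pow 2)) hdenB).add
      (((hasDerivAt_const b (1 : ℝ)).div
          ((((hasDerivAt_id' (x := b)).const_sub a)).const_mul 2) (by simpa using h2sb)).mul
        (((kA.const_mul (-(m : ℝ) ^ 2)).div (kB.pow 2) hB2ne).add
          ((hasDerivAt_const b ((n : ℝ) ^ 2)).div kA hUa0)))).add
      ((((hasDerivAt_id' (x := b)).const_sub a).const_mul (2 * δ ^ 2)).mul kA))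
  have hfunB : (fun y' => Qb (a, y')) = fun y' =>
      -((a - y') / 2) * (pdb (pda U) (a, y')) ^ 2 / (pda U (a, y') * (pdb U (a, y')) ^ 2)
      + (1 / (2 * (a - y'))) *
          (-(m : ℝ) ^ 2 * pda U (a, y') / (pdb U (a, y')) ^ 2 + (n : ℝ) ^ 2 / pda U (a, y'))
      + 2 * δ ^ 2 * (a - y') * pda U (a, y') :=
    funext fun y' => hQb (a, y')
  have hQbab : pdb Qb (a, b) = _ :=
    (congrArg (fun f => deriv f b) hfunB).trans hkeyB.deriv
  -- final assembly
  have hR : Rexpr n m U (a, b) =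
      (-(pdb (pdb (pda (pda U))) (a, b))
        + pdb (pda (pda U)) (a, b) * (1 / (a - b) + pdb (pdb U) (a, b) / pdb U (a, b)
            + pdb (pda U) (a, b) / pda U (a, b))
        + pdb (pdb (pda U)) (a, b) * (1 / (-(a - b)) + pda (pda U) (a, b) / pda U (a, b)
            + pdb (pda U) (a, b) / pdb U (a, b))
        - pda (pda U) (a, b) * pdb (pdb U) (a, b) * pdb (pda U) (a, b) /
            (pda U (a, b) * pdb U (a, b))
        + pda (pda U) (a, b) * ((n : ℝ) ^ 2 * (pdb U (a, b)) ^ 2 /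
              ((a - b) ^ 2 * (pda U (a, b)) ^ 2)
            - pdb (pda U) (a, b) / ((a - b) * pda U (a, b))
            - (pdb (pda U) (a, b)) ^ 2 / (pda U (a, b)) ^ 2)
        + pdb (pdb U) (a, b) * ((m : ℝ) ^ 2 * (pda U (a, b)) ^ 2 /
              ((a - b) ^ 2 * (pdb U (a, b)) ^ 2)
            + pdb (pda U) (a, b) / ((a - b) * pdb U (a, b))
            - (pdb (pda U) (a, b)) ^ 2 / (pdb U (a, b)) ^ 2)
        + ((n : ℝ) ^ 2 / (2 * (a - b) ^ 3)) * (pdb U (a, b) / pda U (a, b)) *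
            (pda U (a, b) + pdb U (a, b) + 2 * (-(a - b)) * pdb (pda U) (a, b))
        - ((m : ℝ) ^ 2 / (2 * (a - b) ^ 3)) * (pda U (a, b) / pdb U (a, b)) *
            (pda U (a, b) + pdb U (a, b) + 2 * (a - b) * pdb (pda U) (a, b))
        + (1 / (2 * (a - b))) * (pdb (pda U) (a, b)) ^ 2 *
            (1 / pda U (a, b) - 1 / pdb U (a, b))) := rfl
  rw [hPab, hQaab, hQbab, hR]
  simp only [Pi.div_apply, Pi.mul_apply, Pi.add_apply, Pi.sub_apply, Pi.neg_apply, Pi.pow_apply]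
  refine iff_zero_of_mul_eq (c := pda U (a, b) * pdb U (a, b)) (d := -(a - b))
    (mul_ne_zero hUa0 hUb0) (neg_ne_zero.mpr hs) ?_
  obtain ⟨s1, hs1⟩ : ∃ t, a - b = t := ⟨_, rfl⟩
  obtain ⟨A, hA1⟩ : ∃ t, pda U (a, b) = t := ⟨_, rfl⟩
  obtain ⟨B, hB1⟩ : ∃ t, pdb U (a, b) = t := ⟨_, rfl⟩
  obtain ⟨C, hC1⟩ : ∃ t, pda (pda U) (a, b) = t := ⟨_, rfl⟩
  obtain ⟨M, hM1⟩ : ∃ t, pdb (pda U) (a, b) = t := ⟨_, rfl⟩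
  obtain ⟨E, hE1⟩ : ∃ t, pdb (pdb U) (a, b) = t := ⟨_, rfl⟩
  obtain ⟨T, hT1⟩ : ∃ t, pdb (pda (pda U)) (a, b) = t := ⟨_, rfl⟩
  obtain ⟨G, hG1⟩ : ∃ t, pdb (pdb (pda U)) (a, b) = t := ⟨_, rfl⟩
  obtain ⟨H, hH1⟩ : ∃ t, pdb (pdb (pda (pda U))) (a, b) = t := ⟨_, rfl⟩
  rw [hs1] at hs
  rw [hA1] at hUa0
  rw [hB1] at hUb0
  rw [hs1, hA1, hB1, hC1, hM1, hE1, hT1, hG1, hH1]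
  have hns : -s1 ≠ 0 := neg_ne_zero.mpr hs
  simp only [div_neg]
  field_simp
  ring
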